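/- Let (X_n)_{n≥1} be a sequence of independent and identically distributed nonnegative random variables, let α ∈ (0,1), and assume lim_{t→∞} t^α P(X_1 > t) = 0. Set S_n = X_1 + ... + X_n. Then n^{-1/α} S_n converges to 0 in probability as n → ∞. -/

import Mathlib

open MeasureTheory Filter Topology Set
open scoped ENNReal

lemma trunc_bound {Ω : Type*} [MeasurableSpace Ω] (μ : Measure Ω) [IsProbabilityMeasure μ]
    (Y : Ω → ℝ) (hY : Measurable Y) (hYpos : ∀ ω, 0 ≤ Y ω)
    (α η t₀ b : ℝ) (hα0 : 0 < α) (hα1 : α < 1) (hη : 0 < η)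
    (ht₀ : 0 < t₀) (htb : t₀ ≤ b)
    (tail : ∀ t, t₀ ≤ t → μ {ω | t < Y ω} ≤ ENNReal.ofReal (η * t ^ (-α))) :
    ∫⁻ ω, ENNReal.ofReal (min (Y ω) b) ∂μ ≤
      ENNReal.ofReal (t₀ + η * b ^ (1 - α) / (1 - α)) := by
  have hb : 0 < b := lt_of_lt_of_le ht₀ htb
  have hnn : 0 ≤ᵐ[μ] fun ω => min (Y ω) b :=
    Filter.Eventually.of_forall fun ω => le_min (hYpos ω) hb.le
  rw [lintegral_eq_lintegral_meas_lt μ hnn ((hY.min measurable_const).aemeasurable)]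
  have hsplit : Ioi (0:ℝ) = (Ioc 0 t₀ ∪ Ioc t₀ b) ∪ Ioi b := by
    rw [Ioc_union_Ioc_eq_Ioc ht₀.le htb, Ioc_union_Ioi_eq_Ioi hb.le]
  rw [hsplit, lintegral_union measurableSet_Ioi (by
      simp only [disjoint_union_left]
      exact ⟨Ioc_disjoint_Ioi (htb), Ioc_disjoint_Ioi le_rfl⟩),
    lintegral_union measurableSet_Ioc (by
      rw [Set.disjoint_left]; rintro x ⟨_, h2⟩ ⟨h3, _⟩; exact absurd h3 (not_lt.mpr h2))]
  -- third piece is zero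
  have h3 : ∫⁻ t in Ioi b, μ {a | t < min (Y a) b} = 0 := by
    rw [setLIntegral_congr_fun measurableSet_Ioi
      (fun t ht => ?_), lintegral_zero]
    have : {a | t < min (Y a) b} = ∅ := by
      ext a; simp only [mem_setOf_eq, mem_empty_iff_false, iff_false, not_lt]
      exact (min_le_right _ _).trans (le_of_lt ht)
    rw [this, measure_empty]
  -- first piece
  have h1 : ∫⁻ t in Ioc (0:ℝ) t₀, μ {a | t < min (Y a) b} ≤ ENNReal.ofReal t₀ := by
    calc ∫⁻ t in Ioc (0:ℝ) t₀, μ {a | t < min (Y a) b}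
        ≤ ∫⁻ _ in Ioc (0:ℝ) t₀, 1 := setLIntegral_mono measurable_const
          (fun t _ => prob_le_one)
      _ = ENNReal.ofReal t₀ := by
          rw [setLIntegral_const, one_mul, Real.volume_Ioc, sub_zero]
  -- second piece
  have h2 : ∫⁻ t in Ioc t₀ b, μ {a | t < min (Y a) b} ≤
      ENNReal.ofReal (η * b ^ (1 - α) / (1 - α)) := by
    have hmono : ∫⁻ t in Ioc t₀ b, μ {a | t < min (Y a) b} ≤
        ∫⁻ t in Ioc t₀ b, ENNReal.ofReal (η * t ^ (-α)) := by
      refine setLIntegral_mono (by fun_prop) (fun t ht => ?_)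
      refine le_trans (measure_mono ?_) (tail t ht.1.le)
      intro a ha
      exact lt_of_lt_of_le ha (min_le_left (Y a) b)
    refine hmono.trans ?_
    have hcont : IntegrableOn (fun t : ℝ => η * t ^ (-α)) (Ioc t₀ b) := by
      refine (ContinuousOn.integrableOn_Icc ?_).mono_set Ioc_subset_Icc_self
      refine ContinuousOn.mul continuousOn_const ?_
      intro x hx
      exact (Real.continuousAt_rpow_const x (-α) (Or.inl (by
        have := hx.1; intro h; rw [h] at this; exact absurd this (not_le.mpr ht₀)))).continuousWithinAt
    rw [← ofReal_integral_eq_lintegral_ofReal hcont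
      ((ae_restrict_iff' measurableSet_Ioc).mpr (Filter.Eventually.of_forall (fun t ht => by
        have h0t : (0:ℝ) < t := ht₀.trans ht.1
        positivity)))]
    apply ENNReal.ofReal_le_ofReal
    have hIoc : ∫ t in Ioc t₀ b, η * t ^ (-α) = ∫ t in t₀..b, η * t ^ (-α) := by
      rw [intervalIntegral.integral_of_le htb]
    rw [hIoc, intervalIntegral.integral_const_mul, integral_rpow (Or.inl (by linarith))]
    have h1α : (0:ℝ) < 1 - α := by linarith
    have heq : -α + 1 = 1 - α := by ring
    rw [heq, mul_div_assoc]
    gcongr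
    exact sub_le_self _ (Real.rpow_nonneg ht₀.le _)
  calc _ ≤ ENNReal.ofReal t₀ + ENNReal.ofReal (η * b ^ (1 - α) / (1 - α)) + 0 :=
        add_le_add (add_le_add h1 h2) h3.le
    _ = _ := by
        have h1α : (0:ℝ) < 1 - α := by linarith
        rw [add_zero, ← ENNReal.ofReal_add ht₀.le (by positivity)]

/-- Proposition A.2 (`conv_prob_0_neg`): if `(X_n)` are i.i.d. nonnegative random
variables with `t^α P(X_1 > t) → 0` for some `α ∈ (0,1)`, then `n^{-1/α} S_n → 0`
in probability. -/
theorem stmt1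
    {Ω : Type*} [MeasurableSpace Ω] (μ : Measure Ω) [IsProbabilityMeasure μ]
    (X : ℕ → Ω → ℝ) (hmeas : ∀ n, Measurable (X n))
    (hpos : ∀ n ω, 0 ≤ X n ω)
    (hindep : ProbabilityTheory.iIndepFun X μ)
    (hident : ∀ n, ProbabilityTheory.IdentDistrib (X n) (X 0) μ μ)
    (α : ℝ) (hα0 : 0 < α) (hα1 : α < 1)
    (htail : Tendsto (fun t : ℝ => t ^ α * (μ {ω | t < X 0 ω}).toReal) atTop (𝓝 0)) :
    ∀ ε > 0, Tendsto
      (fun n : ℕ =>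
        (μ {ω | ε < (n : ℝ) ^ (-(1 : ℝ) / α) * ∑ k ∈ Finset.range n, X k ω}).toReal)
      atTop (𝓝 0) := by
  intro ε hε
  have h1α : (0:ℝ) < 1 - α := by linarith
  rw [Metric.tendsto_atTop]
  intro ρ hρ
  set C : ℝ := 1 + 1 / (ε * (1 - α)) with hC
  have hCpos : 0 < C := by positivity
  set η : ℝ := ρ / (4 * C) with hηdef
  have hη : 0 < η := by positivity
  obtain ⟨t₁, ht₁⟩ := eventually_atTop.mp (htail.eventually (gt_mem_nhds hη))
  set t₀ : ℝ := max t₁ 1 with ht₀def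
  have ht₀ : (0:ℝ) < t₀ := lt_of_lt_of_le one_pos (le_max_right _ _)
  have tailbound : ∀ t, t₀ ≤ t → μ {ω | t < X 0 ω} ≤ ENNReal.ofReal (η * t ^ (-α)) := by
    intro t ht
    have htpos : 0 < t := lt_of_lt_of_le ht₀ ht
    have htα : 0 < t ^ α := Real.rpow_pos_of_pos htpos α
    have h := le_of_lt (ht₁ t (le_trans (le_max_left _ _) ht))
    rw [← ENNReal.ofReal_toReal (measure_ne_top μ _)]
    apply ENNReal.ofReal_le_ofReal
    rw [Real.rpow_neg htpos.le, ← div_eq_mul_inv]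
    rw [le_div_iff₀ htα]
    linarith [h]
  -- eventual conditions in n
  have hbtend : Tendsto (fun n : ℕ => (n:ℝ) ^ ((1:ℝ)/α)) atTop atTop :=
    (tendsto_rpow_atTop (by positivity)).comp tendsto_natCast_atTop_atTop
  obtain ⟨N₁, hN₁⟩ := eventually_atTop.mp (hbtend.eventually_ge_atTop t₀)
  have hexp : (0:ℝ) < 1/α - 1 := by
    have : (1:ℝ) < 1/α := (one_lt_div hα0).mpr hα1
    linarith
  have hgtend : Tendsto (fun n : ℕ => (n:ℝ) * t₀ / (ε * (n:ℝ) ^ ((1:ℝ)/α))) atTop (𝓝 0) := by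
    have h0 : Tendsto (fun n : ℕ => (t₀/ε) * (n:ℝ) ^ (-(1/α - 1))) atTop (𝓝 ((t₀/ε) * 0)) :=
      (((tendsto_rpow_neg_atTop hexp).comp tendsto_natCast_atTop_atTop).const_mul (t₀/ε))
    rw [mul_zero] at h0
    refine Tendsto.congr' ?_ h0
    filter_upwards [eventually_ge_atTop 1] with n hn
    have hn0 : (0:ℝ) < (n:ℝ) := by exact_mod_cast hn
    have hb0 : (0:ℝ) < (n:ℝ) ^ ((1:ℝ)/α) := Real.rpow_pos_of_pos hn0 _
    have : (n:ℝ) ^ (-(1/α - 1)) = (n:ℝ) * ((n:ℝ) ^ ((1:ℝ)/α))⁻¹ := by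
      rw [show -(1/α - 1) = 1 + (-(1/α)) by ring, Real.rpow_add hn0, Real.rpow_one,
        Real.rpow_neg hn0.le]
    rw [this]
    field_simp
  obtain ⟨N₂, hN₂⟩ := eventually_atTop.mp (hgtend.eventually (gt_mem_nhds (by positivity : (0:ℝ) < ρ/4)))
  refine ⟨max (max N₁ N₂) 1, fun n hn => ?_⟩
  have hn1 : 1 ≤ n := le_trans (le_max_right _ _) hn
  have hnN₁ : N₁ ≤ n := le_trans (le_trans (le_max_left _ _) (le_max_left _ _)) hn
  have hnN₂ : N₂ ≤ n := le_trans (le_trans (le_max_right _ _) (le_max_left _ _)) hn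
  set b : ℝ := (n:ℝ) ^ ((1:ℝ)/α) with hbdef
  have hbn : t₀ ≤ b := hN₁ n hnN₁
  have hn0 : (0:ℝ) < (n:ℝ) := by exact_mod_cast hn1
  have hb0 : (0:ℝ) < b := Real.rpow_pos_of_pos hn0 _
  have hsmall : (n:ℝ) * t₀ / (ε * b) < ρ/4 := hN₂ n hnN₂
  have hbα : b ^ (-α) = ((n:ℝ))⁻¹ := by
    rw [hbdef, ← Real.rpow_mul hn0.le, show (1/α)*(-α) = (-1:ℝ) by field_simp,
      Real.rpow_neg_one]
  have hb1α : (n:ℝ) * b ^ ((1:ℝ) - α) = b := by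
    have : b ^ ((1:ℝ) - α) = b * b ^ (-α) := by
      rw [show (1:ℝ) - α = 1 + (-α) by ring, Real.rpow_add hb0, Real.rpow_one]
    rw [this, hbα]
    field_simp
  -- rewrite the event
  have hset : {ω | ε < (n : ℝ) ^ (-(1:ℝ) / α) * ∑ k ∈ Finset.range n, X k ω}
      = {ω | ε * b < ∑ k ∈ Finset.range n, X k ω} := by
    ext ω
    simp only [Set.mem_setOf_eq]
    rw [neg_div, Real.rpow_neg hn0.le, ← hbdef, ← div_eq_inv_mul, lt_div_iff₀ hb0]
  set T : Ω → ℝ≥0∞ := fun ω => ∑ k ∈ Finset.range n, ENNReal.ofReal (min (X k ω) b) with hTdef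
  have hsub : {ω | ε * b < ∑ k ∈ Finset.range n, X k ω} ⊆
      (⋃ k ∈ Finset.range n, {ω | b < X k ω}) ∪ {ω | ENNReal.ofReal (ε*b) ≤ T ω} := by
    intro ω hω
    by_cases hcase : ∀ k ∈ Finset.range n, X k ω ≤ b
    · right
      have hTω : T ω = ENNReal.ofReal (∑ k ∈ Finset.range n, X k ω) := by
        rw [ENNReal.ofReal_sum_of_nonneg (fun k _ => hpos k ω)]
        exact Finset.sum_congr rfl fun k hk => by rw [min_eq_left (hcase k hk)]
      rw [Set.mem_setOf_eq, hTω]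
      exact ENNReal.ofReal_le_ofReal (le_of_lt hω)
    · left
      push_neg at hcase
      obtain ⟨k, hk, hkb⟩ := hcase
      exact Set.mem_biUnion hk hkb
  have hμ1 : μ (⋃ k ∈ Finset.range n, {ω | b < X k ω}) ≤ ENNReal.ofReal η := by
    refine (measure_biUnion_finset_le _ _).trans ?_
    have heach : ∀ k, μ {ω | b < X k ω} = μ {ω | b < X 0 ω} := fun k => by
      exact (hident k).measure_mem_eq (measurableSet_Ioi (a := b))
    rw [Finset.sum_congr rfl (fun k _ => heach k), Finset.sum_const, Finset.card_range,
      nsmul_eq_mul]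
    calc (n : ℝ≥0∞) * μ {ω | b < X 0 ω}
        ≤ (n : ℝ≥0∞) * ENNReal.ofReal (η * b ^ (-α)) := by
          gcongr
          exact tailbound b hbn
      _ = ENNReal.ofReal ((n:ℝ) * (η * b ^ (-α))) := by
          rw [ENNReal.ofReal_mul (Nat.cast_nonneg n), ENNReal.ofReal_natCast]
      _ = ENNReal.ofReal η := by
          rw [hbα]
          congr 1
          field_simp
  have hTmeas : Measurable T :=
    Finset.measurable_sum _ fun k _ =>
      ENNReal.measurable_ofReal.comp ((hmeas k).min measurable_const)
  have hεb : (0:ℝ) < ε * b := by positivity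
  have hμ2 : μ {ω | ENNReal.ofReal (ε*b) ≤ T ω} ≤ (∫⁻ ω, T ω ∂μ) / ENNReal.ofReal (ε*b) :=
    meas_ge_le_lintegral_div hTmeas.aemeasurable
      (ne_of_gt (ENNReal.ofReal_pos.mpr hεb)) ENNReal.ofReal_ne_top
  have hlint : ∫⁻ ω, T ω ∂μ ≤
      (n : ℝ≥0∞) * ENNReal.ofReal (t₀ + η * b ^ ((1:ℝ) - α) / (1 - α)) := by
    show ∫⁻ ω, ∑ k ∈ Finset.range n, ENNReal.ofReal (min (X k ω) b) ∂μ ≤ _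
    rw [lintegral_finset_sum _ (fun k _ =>
      Measurable.ennreal_ofReal ((hmeas k).min measurable_const))]
    have heq : ∀ k, ∫⁻ ω, ENNReal.ofReal (min (X k ω) b) ∂μ
        = ∫⁻ ω, ENNReal.ofReal (min (X 0 ω) b) ∂μ := fun k =>
      ((hident k).comp (u := fun x : ℝ => ENNReal.ofReal (min x b))
        (ENNReal.measurable_ofReal.comp (measurable_id.min measurable_const))).lintegral_eq
    rw [Finset.sum_congr rfl fun k _ => heq k, Finset.sum_const, Finset.card_range,
      nsmul_eq_mul]
    gcongr
    exact trunc_bound μ (X 0) (hmeas 0) (hpos 0) α η t₀ b hα0 hα1 hη ht₀ hbn tailbound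
  have hdiv : (∫⁻ ω, T ω ∂μ) / ENNReal.ofReal (ε*b)
      ≤ ENNReal.ofReal ((n:ℝ) * t₀ / (ε*b) + η / (ε*(1-α))) := by
    refine ENNReal.div_le_of_le_mul ?_
    refine hlint.trans ?_
    rw [← ENNReal.ofReal_natCast n, ← ENNReal.ofReal_mul (Nat.cast_nonneg n),
      ← ENNReal.ofReal_mul (by positivity)]
    apply ENNReal.ofReal_le_ofReal
    have hεne : ε ≠ 0 := ne_of_gt hε
    have hbne : b ≠ 0 := ne_of_gt hb0
    have h1αne : (1:ℝ) - α ≠ 0 := ne_of_gt h1α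
    have hnne : (n:ℝ) ≠ 0 := ne_of_gt hn0
    have hbsub : b ^ ((1:ℝ) - α) = b / (n:ℝ) := by
      rw [eq_div_iff hnne, mul_comm]
      exact hb1α
    rw [hbsub]
    have e1 : (n:ℝ) * (t₀ + η * (b / (n:ℝ)) / (1 - α)) = (n:ℝ)*t₀ + η*b/(1-α) := by
      field_simp
    have e2 : ((n:ℝ)*t₀/(ε*b) + η/(ε*(1-α))) * (ε*b) = (n:ℝ)*t₀ + η*b/(1-α) := by
      field_simp
    rw [e1, e2]
  -- put everything together
  have htot : (μ {ω | ε < (n : ℝ) ^ (-(1:ℝ) / α) * ∑ k ∈ Finset.range n, X k ω})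
      ≤ ENNReal.ofReal (η + ((n:ℝ) * t₀ / (ε*b) + η / (ε*(1-α)))) := by
    rw [hset]
    refine le_trans (measure_mono hsub) ?_
    refine le_trans (measure_union_le _ _) ?_
    rw [ENNReal.ofReal_add hη.le (by positivity)]
    exact add_le_add hμ1 (hμ2.trans hdiv)
  have hfinal : (μ {ω | ε < (n : ℝ) ^ (-(1:ℝ) / α) * ∑ k ∈ Finset.range n, X k ω}).toReal
      ≤ η + ((n:ℝ) * t₀ / (ε*b) + η / (ε*(1-α))) := by
    refine le_trans (ENNReal.toReal_mono ENNReal.ofReal_ne_top htot) ?_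
    rw [ENNReal.toReal_ofReal (by positivity)]
  rw [dist_zero_right, Real.norm_eq_abs, abs_of_nonneg ENNReal.toReal_nonneg]
  refine lt_of_le_of_lt hfinal ?_
  have hηC : η + η / (ε*(1-α)) = ρ/4 := by
    rw [hηdef, hC]
    field_simp
  linarith
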